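/- There is no function v of class C⁴ on the closed unit square Q̄ = [0,1]² satisfying Δv = x₁x₂ in Q together with the boundary conditions ∂₁v(0, x₂) = 0 for all x₂ ∈ [0,1] and ∂₂v(x₁, 0) = 0 for all x₁ ∈ [0,1]. -/

import Mathlib

noncomputable def pt (a b : ℝ) : EuclideanSpace ℝ (Fin 2) :=
  (WithLp.equiv 2 (Fin 2 → ℝ)).symm ![a, b]

/-- mixed second partial derivative `∂ᵥ∂_w v` -/
noncomputable def D2 (v : EuclideanSpace ℝ (Fin 2) → ℝ)
    (x w w' : EuclideanSpace ℝ (Fin 2)) : ℝ :=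
  fderiv ℝ (fun y => fderiv ℝ v y w') x w

section aux

local notation "E" => EuclideanSpace ℝ (Fin 2)

/-- directional derivative operator -/
noncomputable def Dw (w : E) (f : E → ℝ) : E → ℝ := fun y => fderiv ℝ f y w

lemma pt_eq (a b : ℝ) : pt a b = a • pt 1 0 + b • pt 0 1 := by
  ext i
  fin_cases i <;> simp [pt]

lemma curve1 (t s : ℝ) : HasDerivAt (fun a => pt a t) (pt 1 0) s := by
  have h : (fun a => pt a t) = fun a => a • pt 1 0 + t • pt 0 1 :=
    funext fun a => pt_eq a t
  rw [h]
  simpa using ((hasDerivAt_id s).smul_const (pt 1 0)).add_const (t • pt 0 1)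

lemma curve2 (s t : ℝ) : HasDerivAt (fun b => pt s b) (pt 0 1) t := by
  have h : (fun b => pt s b) = fun b => b • pt 0 1 + s • pt 1 0 := by
    funext b; rw [pt_eq s b]; abel
  rw [h]
  simpa using ((hasDerivAt_id t).smul_const (pt 0 1)).add_const (s • pt 1 0)

lemma deriv1 (f : E → ℝ) (hf : Differentiable ℝ f) (s t : ℝ) :
    HasDerivAt (fun a => f (pt a t)) (Dw (pt 1 0) f (pt s t)) s :=
  (hf (pt s t)).hasFDerivAt.comp_hasDerivAt s (curve1 t s)

lemma deriv2 (f : E → ℝ) (hf : Differentiable ℝ f) (s t : ℝ) :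
    HasDerivAt (fun b => f (pt s b)) (Dw (pt 0 1) f (pt s t)) t :=
  (hf (pt s t)).hasFDerivAt.comp_hasDerivAt t (curve2 s t)

/-- directional derivative of a `C^{n+1}` function is `C^n` -/
lemma dirSmooth {n : ℕ} {f : E → ℝ} (hf : ContDiff ℝ (n + 1 : ℕ) f) (w : E) :
    ContDiff ℝ (n : ℕ) (Dw w f) :=
  (hf.fderiv_right (by norm_cast)).clm_apply contDiff_const

/-- symmetry of second derivatives -/
lemma symmD2 {f : E → ℝ} (hf : ContDiff ℝ 2 f) (x w w' : E) :
    D2 f x w w' = D2 f x w' w := by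
  have hsymm := (hf.contDiffAt (x := x)).isSymmSndFDerivAt (by simp [minSmoothness_of_isRCLikeNormedField])
  have hd : DifferentiableAt ℝ (fderiv ℝ f) x :=
    ((hf.fderiv_right (m := 1) (by norm_num)).differentiable (by norm_num)) x
  have key : ∀ u u' : E, D2 f x u u' = fderiv ℝ (fderiv ℝ f) x u u' := by
    intro u u'
    have : (fun y => fderiv ℝ f y u') = fun y => (fderiv ℝ f y) ((fun _ : E => u') y) := rfl
    rw [D2, this, fderiv_clm_apply hd (differentiableAt_const u')]
    simp
  rw [key, key, hsymm.eq]

lemma Dw_swap {f : E → ℝ} (hf : ContDiff ℝ 2 f) (w w' : E) :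
    Dw w (Dw w' f) = Dw w' (Dw w f) :=
  funext fun y => (symmD2 hf y w w' : D2 f y w w' = D2 f y w' w)

lemma Dw_add {p q : E → ℝ} (hp : Differentiable ℝ p) (hq : Differentiable ℝ q) (w : E) :
    Dw w (fun y => p y + q y) = fun y => Dw w p y + Dw w q y := by
  funext y
  show fderiv ℝ (fun y => p y + q y) y w = fderiv ℝ p y w + fderiv ℝ q y w
  rw [fderiv_fun_add (hp y) (hq y)]
  rfl

/-- a differentiable function vanishing on `[0,1]` has vanishing derivative on `[0,1]` -/
lemma zeroDeriv {h : ℝ → ℝ} (hd : Differentiable ℝ h)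
    (h0 : ∀ t ∈ Set.Icc (0:ℝ) 1, h t = 0) :
    ∀ t ∈ Set.Icc (0:ℝ) 1, deriv h t = 0 := by
  intro t ht
  have hu : UniqueDiffWithinAt ℝ (Set.Icc (0:ℝ) 1) t :=
    (uniqueDiffOn_Icc zero_lt_one) t ht
  rw [← (hd t).derivWithin hu, derivWithin_congr (fun y hy => h0 y hy) (h0 t ht)]
  exact congrFun (derivWithin_const _ (0:ℝ)) t

lemma stepV {f : E → ℝ} (hf : Differentiable ℝ f)
    (h0 : ∀ t ∈ Set.Icc (0:ℝ) 1, f (pt 0 t) = 0) :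
    ∀ t ∈ Set.Icc (0:ℝ) 1, Dw (pt 0 1) f (pt 0 t) = 0 := by
  intro t ht
  have hd : Differentiable ℝ (fun b => f (pt 0 b)) :=
    fun b => (deriv2 f hf 0 b).differentiableAt
  have := zeroDeriv hd h0 t ht
  rwa [(deriv2 f hf 0 t).deriv] at this

lemma stepH {f : E → ℝ} (hf : Differentiable ℝ f)
    (h0 : ∀ s ∈ Set.Icc (0:ℝ) 1, f (pt s 0) = 0) :
    ∀ s ∈ Set.Icc (0:ℝ) 1, Dw (pt 1 0) f (pt s 0) = 0 := by
  intro s hs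
  have hd : Differentiable ℝ (fun a => f (pt a 0)) :=
    fun a => (deriv1 f hf a 0).differentiableAt
  have := zeroDeriv hd h0 s hs
  rwa [(deriv1 f hf s 0).deriv] at this

end aux

theorem stmt_15 :
    ¬∃ v : EuclideanSpace ℝ (Fin 2) → ℝ, ContDiff ℝ 4 v ∧
      (∀ x₁ ∈ Set.Icc (0 : ℝ) 1, ∀ x₂ ∈ Set.Icc (0 : ℝ) 1,
        D2 v (pt x₁ x₂) (pt 1 0) (pt 1 0) + D2 v (pt x₁ x₂) (pt 0 1) (pt 0 1) = x₁ * x₂) ∧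
      (∀ x₂ ∈ Set.Icc (0 : ℝ) 1, fderiv ℝ v (pt 0 x₂) (pt 1 0) = 0) ∧
      (∀ x₁ ∈ Set.Icc (0 : ℝ) 1, fderiv ℝ v (pt x₁ 0) (pt 0 1) = 0) := by
  rintro ⟨v, hv, hpde, hbc1, hbc2⟩
  set e1 : EuclideanSpace ℝ (Fin 2) := pt 1 0 with he1
  set e2 : EuclideanSpace ℝ (Fin 2) := pt 0 1 with he2
  have hmem : (0:ℝ) ∈ Set.Icc (0:ℝ) 1 := by norm_num
  -- smoothness bookkeeping
  have hv4 : ContDiff ℝ ((4:ℕ) : ℕ∞) v := by exact_mod_cast hv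
  have hg1 : ContDiff ℝ ((3:ℕ) : ℕ∞) (Dw e1 v) := dirSmooth hv4 e1
  have hg2 : ContDiff ℝ ((3:ℕ) : ℕ∞) (Dw e2 v) := dirSmooth hv4 e2
  have hg11 : ContDiff ℝ ((2:ℕ) : ℕ∞) (Dw e1 (Dw e1 v)) := dirSmooth hg1 e1
  have hg22 : ContDiff ℝ ((2:ℕ) : ℕ∞) (Dw e2 (Dw e2 v)) := dirSmooth hg2 e2
  have hg21 : ContDiff ℝ ((2:ℕ) : ℕ∞) (Dw e1 (Dw e2 v)) := dirSmooth hg2 e1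
  have hg12 : ContDiff ℝ ((2:ℕ) : ℕ∞) (Dw e2 (Dw e1 v)) := dirSmooth hg1 e2
  have hq1 : ContDiff ℝ ((1:ℕ) : ℕ∞) (Dw e1 (Dw e1 (Dw e1 v))) := dirSmooth hg11 e1
  have hq2 : ContDiff ℝ ((1:ℕ) : ℕ∞) (Dw e1 (Dw e2 (Dw e2 v))) := dirSmooth hg22 e1
  have hk1 : ContDiff ℝ ((1:ℕ) : ℕ∞) (Dw e1 (Dw e1 (Dw e2 v))) := dirSmooth hg21 e1
  have hk2 : ContDiff ℝ ((1:ℕ) : ℕ∞) (Dw e2 (Dw e2 (Dw e1 v))) := dirSmooth hg12 e2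
  have one_le : ((1:ℕ) : ℕ∞) ≤ ((1:ℕ) : ℕ∞) := le_refl _
  have d_g1 : Differentiable ℝ (Dw e1 v) := hg1.differentiable (by norm_cast)
  have d_g2 : Differentiable ℝ (Dw e2 v) := hg2.differentiable (by norm_cast)
  have d_g11 : Differentiable ℝ (Dw e1 (Dw e1 v)) := hg11.differentiable (by norm_cast)
  have d_g22 : Differentiable ℝ (Dw e2 (Dw e2 v)) := hg22.differentiable (by norm_cast)
  have d_g21 : Differentiable ℝ (Dw e1 (Dw e2 v)) := hg21.differentiable (by norm_cast)
  have d_g12 : Differentiable ℝ (Dw e2 (Dw e1 v)) := hg12.differentiable (by norm_cast)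
  have d_q1 : Differentiable ℝ (Dw e1 (Dw e1 (Dw e1 v))) := hq1.differentiable (by norm_cast)
  have d_q2 : Differentiable ℝ (Dw e1 (Dw e2 (Dw e2 v))) := hq2.differentiable (by norm_cast)
  have d_k1 : Differentiable ℝ (Dw e1 (Dw e1 (Dw e2 v))) := hk1.differentiable (by norm_cast)
  have d_k2 : Differentiable ℝ (Dw e2 (Dw e2 (Dw e1 v))) := hk2.differentiable (by norm_cast)
  have hv2 : ContDiff ℝ 2 v := hv.of_le (by norm_num)
  have hg1' : ContDiff ℝ 2 (Dw e1 v) := hg1.of_le (by norm_cast)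
  have hg2' : ContDiff ℝ 2 (Dw e2 v) := hg2.of_le (by norm_cast)
  have hg11' : ContDiff ℝ 2 (Dw e1 (Dw e1 v)) := by exact_mod_cast hg11
  have hg22' : ContDiff ℝ 2 (Dw e2 (Dw e2 v)) := by exact_mod_cast hg22
  -- boundary condition chains
  have b0 : ∀ t ∈ Set.Icc (0:ℝ) 1, Dw e1 v (pt 0 t) = 0 := hbc1
  have b1 := stepV d_g1 b0
  have b2 := stepV d_g12 b1
  have b3 := stepV d_k2 b2
  have c0 : ∀ s ∈ Set.Icc (0:ℝ) 1, Dw e2 v (pt s 0) = 0 := hbc2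
  have c1 := stepH d_g2 c0
  have c2 := stepH d_g21 c1
  have c3 := stepH d_k1 c2
  -- PDE chain: first derivative in direction e1
  have dF : Differentiable ℝ (fun y => Dw e1 (Dw e1 v) y + Dw e2 (Dw e2 v) y) :=
    d_g11.add d_g22
  have p1 : ∀ t ∈ Set.Icc (0:ℝ) 1, ∀ s ∈ Set.Icc (0:ℝ) 1,
      Dw e1 (fun y => Dw e1 (Dw e1 v) y + Dw e2 (Dw e2 v) y) (pt s t) - t = 0 := by
    intro t ht s hs
    have hφ : ∀ a : ℝ, HasDerivAt
        (fun a => (fun y => Dw e1 (Dw e1 v) y + Dw e2 (Dw e2 v) y) (pt a t) - a * t)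
        (Dw e1 (fun y => Dw e1 (Dw e1 v) y + Dw e2 (Dw e2 v) y) (pt a t) - t) a :=
      fun a => (deriv1 _ dF a t).sub (hasDerivAt_mul_const t)
    have hd : Differentiable ℝ
        (fun a => (fun y => Dw e1 (Dw e1 v) y + Dw e2 (Dw e2 v) y) (pt a t) - a * t) :=
      fun a => (hφ a).differentiableAt
    have h0 : ∀ a ∈ Set.Icc (0:ℝ) 1,
        (fun y => Dw e1 (Dw e1 v) y + Dw e2 (Dw e2 v) y) (pt a t) - a * t = 0 := by
      intro a ha
      have := hpde a ha t ht
      simp only [sub_eq_zero]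
      exact this
    have := zeroDeriv hd h0 s hs
    rwa [(hφ s).deriv] at this
  -- rewrite the first derivative as a sum
  have hsum1 : Dw e1 (fun y => Dw e1 (Dw e1 v) y + Dw e2 (Dw e2 v) y)
      = fun y => Dw e1 (Dw e1 (Dw e1 v)) y + Dw e1 (Dw e2 (Dw e2 v)) y :=
    Dw_add d_g11 d_g22 e1
  have dG : Differentiable ℝ (fun y => Dw e1 (Dw e1 (Dw e1 v)) y + Dw e1 (Dw e2 (Dw e2 v)) y) :=
    d_q1.add d_q2
  -- second derivative in direction e2 at the origin
  have p2 : Dw e2 (fun y => Dw e1 (Dw e1 (Dw e1 v)) y + Dw e1 (Dw e2 (Dw e2 v)) y) (pt 0 0)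
      - 1 = 0 := by
    have hψ : ∀ b : ℝ, HasDerivAt
        (fun b => (fun y => Dw e1 (Dw e1 (Dw e1 v)) y + Dw e1 (Dw e2 (Dw e2 v)) y) (pt 0 b) - b)
        (Dw e2 (fun y => Dw e1 (Dw e1 (Dw e1 v)) y + Dw e1 (Dw e2 (Dw e2 v)) y) (pt 0 b) - 1) b :=
      fun b => (deriv2 _ dG 0 b).sub (hasDerivAt_id b)
    have hd : Differentiable ℝ
        (fun b => (fun y => Dw e1 (Dw e1 (Dw e1 v)) y + Dw e1 (Dw e2 (Dw e2 v)) y) (pt 0 b) - b) :=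
      fun b => (hψ b).differentiableAt
    have h0 : ∀ b ∈ Set.Icc (0:ℝ) 1,
        (fun y => Dw e1 (Dw e1 (Dw e1 v)) y + Dw e1 (Dw e2 (Dw e2 v)) y) (pt 0 b) - b = 0 := by
      intro b hb
      have := p1 b hb 0 hmem
      rw [hsum1] at this
      simpa using this
    have := zeroDeriv hd h0 0 hmem
    rwa [(hψ 0).deriv] at this
  -- split the second derivative
  have hsum2 : Dw e2 (fun y => Dw e1 (Dw e1 (Dw e1 v)) y + Dw e1 (Dw e2 (Dw e2 v)) y)
      = fun y => Dw e2 (Dw e1 (Dw e1 (Dw e1 v))) y + Dw e2 (Dw e1 (Dw e2 (Dw e2 v))) y :=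
    Dw_add d_q1 d_q2 e2
  rw [hsum2] at p2
  -- symmetry manipulations: term A
  have eA : Dw e2 (Dw e1 (Dw e1 (Dw e1 v))) = Dw e1 (Dw e1 (Dw e1 (Dw e2 v))) := by
    rw [Dw_swap hg11' e2 e1]
    rw [Dw_swap hg1' e2 e1]
    rw [Dw_swap hv2 e2 e1]
  have eB : Dw e2 (Dw e1 (Dw e2 (Dw e2 v))) = Dw e2 (Dw e2 (Dw e2 (Dw e1 v))) := by
    rw [Dw_swap hg2' e1 e2]
    rw [Dw_swap hv2 e1 e2]
  have hA : Dw e2 (Dw e1 (Dw e1 (Dw e1 v))) (pt 0 0) = 0 := by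
    rw [eA]; exact c3 0 hmem
  have hB : Dw e2 (Dw e1 (Dw e2 (Dw e2 v))) (pt 0 0) = 0 := by
    rw [eB]; exact b3 0 hmem
  simp only [hA, hB] at p2
  norm_num at p2
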